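/- Let G be a finite group, α : A* → G a surjective morphism, and L = α⁻¹(1_G). Then A* is a finite union of languages of the form L·a₁·L·a₂·L ⋯ a_ℓ·L with ℓ ∈ ℕ and a₁,…,a_ℓ ∈ A (the case ℓ = 0 giving L itself). Concretely, every word w ∈ A* can be written w = v₀a₁v₁⋯a_ℓv_ℓ with each v_i ∈ L, ℓ bounded by a function of |G|. -/

import Mathlib

open Computability

instance {α : Type*} : Union (Language α) := ⟨Set.union⟩
instance {α : Type*} : Inter (Language α) := ⟨Set.inter⟩
instance {α : Type*} : HasSubset (Language α) := ⟨fun l m => ∀ x ∈ l, x ∈ m⟩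
instance {α : Type*} : EmptyCollection (Language α) := ⟨fun _ => False⟩

theorem aux_decomp {A G : Type*} [Group G] [Fintype G] [DecidableEq G]
    (α : List A → G) (hα1 : α [] = 1) (hαm : ∀ u v : List A, α (u ++ v) = α u * α v) :
    ∀ n : ℕ, ∀ r : List A, r.length ≤ n → ∀ (S : Finset G) (h : G),
      (∀ u, u <+: r → h * α u ∉ S) →
      ∃ (p : List (List A × A)) (v : List A),
        p.length + S.card + 1 ≤ Fintype.card G ∧ (∀ q ∈ p, α q.1 = 1) ∧ α v = 1 ∧
        r = (p.map fun q => q.1 ++ [q.2]).flatten ++ v := by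
  intro n
  induction n with
  | zero =>
    intro r hr S h hinv
    have hr0 : r = [] := List.length_eq_zero_iff.mp (Nat.le_zero.mp hr)
    subst hr0
    have hhS : h ∉ S := by simpa [hα1] using hinv [] List.nil_prefix
    refine ⟨[], [], ?_, by simp, hα1, by simp⟩
    have : (insert h S).card ≤ Fintype.card G := Finset.card_le_univ _
    simp [Finset.card_insert_of_notMem hhS] at this
    simp only [List.length_nil]; omega
  | succ n ih =>
    intro r hr S h hinv
    have hhS : h ∉ S := by simpa [hα1] using hinv [] List.nil_prefix
    by_cases hr1 : α r = 1
    · refine ⟨[], r, ?_, by simp, hr1, by simp⟩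
      have : (insert h S).card ≤ Fintype.card G := Finset.card_le_univ _
      simp [Finset.card_insert_of_notMem hhS] at this
      simp only [List.length_nil]; omega
    · -- choose the longest prefix with α = 1
      set Ks : Finset ℕ := (Finset.range (r.length + 1)).filter
        (fun k => α (r.take k) = 1) with hKs
      have hne : Ks.Nonempty := ⟨0, by simp [hKs, hα1]⟩
      set k : ℕ := Ks.max' hne with hk
      have hkmem : k ∈ Ks := Ks.max'_mem hne
      have hk1 : α (r.take k) = 1 := by
        have := (Finset.mem_filter.mp hkmem).2; simpa using this
      have hkle : k ≤ r.length := by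
        have := (Finset.mem_filter.mp hkmem).1
        simp only [Finset.mem_range] at this; omega
      have hkmax : ∀ m ∈ Ks, m ≤ k := fun m hm => Ks.le_max' m hm
      have hklt : k < r.length := by
        rcases lt_or_eq_of_le hkle with h' | h'
        · exact h'
        · exfalso; apply hr1; rw [← List.take_length (l := r), ← h']; exact hk1
      set a : A := r.get ⟨k, hklt⟩ with ha
      set v : List A := r.take k with hv
      set r' : List A := r.drop (k + 1) with hr'
      have hsplit : r = (v ++ [a]) ++ r' := by
        have hva : v ++ [a] = r.take (k + 1) := by
          rw [hv, ha, ← List.concat_eq_append]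
          exact List.take_concat_get hklt
        rw [hva, hr', List.take_append_drop]
      have hlen' : r'.length ≤ n := by
        rw [hr', List.length_drop]; omega
      have hinv' : ∀ u, u <+: r' →
          (h * α (v ++ [a])) * α u ∉ insert h S := by
        intro u hu
        have hpre : (v ++ [a]) ++ u <+: r := by
          rw [hsplit]
          exact (List.prefix_append_right_inj _).mpr hu
        have hval : (h * α (v ++ [a])) * α u = h * α ((v ++ [a]) ++ u) := by
          simp only [hαm, mul_assoc]
        rw [hval, Finset.mem_insert]
        push_neg
        constructor
        · -- not equal to h : would give a longer prefix with α = 1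
          intro heq
          have hα1' : α ((v ++ [a]) ++ u) = 1 := mul_eq_left.mp heq
          have hlenle : ((v ++ [a]) ++ u).length ≤ r.length := hpre.length_le
          have htake : (v ++ [a]) ++ u = r.take (((v ++ [a]) ++ u).length) :=
            List.prefix_iff_eq_take.mp hpre
          have hmem : ((v ++ [a]) ++ u).length ∈ Ks := by
            rw [hKs, Finset.mem_filter, Finset.mem_range]
            exact ⟨by omega, by rw [← htake]; exact hα1'⟩
          have := hkmax _ hmem
          have hlv : v.length = k := by rw [hv, List.length_take]; omega
          simp [List.length_append, hlv] at this
        · exact hinv _ hpre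
      obtain ⟨p', v', hcard, hp', hv', hflat⟩ :=
        ih r' hlen' (insert h S) (h * α (v ++ [a])) hinv'
      refine ⟨(v, a) :: p', v', ?_, ?_, hv', ?_⟩
      · rw [Finset.card_insert_of_notMem hhS] at hcard
        simp only [List.length_cons]; omega
      · intro q hq
        rcases List.mem_cons.mp hq with h' | h'
        · rw [h']; exact hk1
        · exact hp' q h'
      · rw [hsplit, hflat]; simp

theorem univ_decomposition_group {A G : Type*} [Group G] [Finite G]
    (α : List A → G) (hα1 : α [] = 1) (hαm : ∀ u v : List A, α (u ++ v) = α u * α v)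
    (hsurj : Function.Surjective α) :
    ∃ B : ℕ, ∀ w : List A,
      ∃ (p : List (List A × A)) (v : List A),
        p.length ≤ B ∧ (∀ q ∈ p, α q.1 = 1) ∧ α v = 1 ∧
        w = (p.map fun q => q.1 ++ [q.2]).flatten ++ v := by
  classical
  have : Fintype G := Fintype.ofFinite G
  refine ⟨Fintype.card G, fun w => ?_⟩
  obtain ⟨p, v, hc, hp, hv, hw⟩ :=
    aux_decomp α hα1 hαm w.length w le_rfl ∅ 1 (by simp)
  exact ⟨p, v, by omega, hp, hv, hw⟩
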